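/- Let L : ℝ^p → ℝ be three times continuously differentiable and (γ,2)-self-concordant. Then: (i) for every θ₀ ∈ ℝ^p and r > 0, inf over θ with ‖θ − θ₀‖₂ ≤ r of λ_min(∇²L(θ)) is at least exp(−γr)·λ_min(∇²L(θ₀)); and (ii) for every set Θ₀ ⊆ ℝ^p of diameter at most D, one has ‖θ₁ − θ₂‖²_{∇²L(θ₂)} ≤ exp(γD)·‖θ₁ − θ₂‖²_{∇²L(θ₁)} for all θ₁, θ₂ ∈ Θ₀; moreover if ∇²L(θ₀) is positive definite for some θ₀ ∈ Θ₀, then ∇²L(θ) is positive definite for every θ ∈ Θ₀. -/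

import Mathlib

open scoped RealInnerProductSpace

/-- The smallest eigenvalue of the Hessian of `L` at `θ`, defined as the infimum of the Hessian
quadratic form `∇²L(θ)[u,u]` over the unit sphere. -/
noncomputable def hessLambdaMin {p : ℕ} (L : EuclideanSpace ℝ (Fin p) → ℝ)
    (θ : EuclideanSpace ℝ (Fin p)) : ℝ :=
  ⨅ u : Metric.sphere (0 : EuclideanSpace ℝ (Fin p)) 1, iteratedFDeriv ℝ 2 L θ ![u.1, u.1]

/-- Derivative of the Hessian quadratic form along a line. -/
lemma hess_line_deriv {p : ℕ} (L : EuclideanSpace ℝ (Fin p) → ℝ) (hC3 : ContDiff ℝ 3 L)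
    (x v u : EuclideanSpace ℝ (Fin p)) (t : ℝ) :
    HasDerivAt (fun t : ℝ => iteratedFDeriv ℝ 2 L (x + t • v) ![u, u])
      (iteratedFDeriv ℝ 3 L (x + t • v) ![v, u, u]) t := by
  have hΦ : ContDiff ℝ 1 (iteratedFDeriv ℝ 2 L) := hC3.iteratedFDeriv_right (by norm_num)
  set y := x + t • v with hy
  have h1 : HasFDerivAt (iteratedFDeriv ℝ 2 L) (fderiv ℝ (iteratedFDeriv ℝ 2 L) y) y :=
    (hΦ.differentiable one_ne_zero y).hasFDerivAt
  have h2 : HasDerivAt (fun t : ℝ => x + t • v) v t := by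
    simpa using ((hasDerivAt_id t).smul_const v).const_add x
  have h3 : HasDerivAt (fun t : ℝ => iteratedFDeriv ℝ 2 L (x + t • v))
      (fderiv ℝ (iteratedFDeriv ℝ 2 L) y v) t := h1.comp_hasDerivAt t h2
  have h4 := (ContinuousMultilinearMap.apply ℝ (fun _ : Fin 2 => EuclideanSpace ℝ (Fin p)) ℝ
      ![u, u]).hasFDerivAt.comp_hasDerivAt t h3
  have h5 : iteratedFDeriv ℝ 3 L y ![v, u, u]
      = fderiv ℝ (iteratedFDeriv ℝ 2 L) y v ![u, u] := by
    have h := iteratedFDeriv_succ_apply_left (𝕜 := ℝ) (n := 2) (f := L) (x := y) ![v, u, u]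
    simpa using h
  rw [h5]; exact h4

lemma hess_nonneg {p : ℕ} (hp : 1 ≤ p) {γ : ℝ} (hγ : 0 < γ)
    (L : EuclideanSpace ℝ (Fin p) → ℝ)
    (hSC : ∀ x u v : EuclideanSpace ℝ (Fin p),
      |iteratedFDeriv ℝ 3 L x ![v, u, u]| ≤ γ * iteratedFDeriv ℝ 2 L x ![u, u] * ‖v‖)
    (x u : EuclideanSpace ℝ (Fin p)) : 0 ≤ iteratedFDeriv ℝ 2 L x ![u, u] := by
  set w : EuclideanSpace ℝ (Fin p) := EuclideanSpace.single ⟨0, hp⟩ 1 with hw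
  have hwn : ‖w‖ = 1 := by simp [hw]
  have h := hSC x u w
  rw [hwn, mul_one] at h
  have h0 : (0:ℝ) ≤ γ * iteratedFDeriv ℝ 2 L x ![u, u] := le_trans (abs_nonneg _) h
  nlinarith

/-- Key Grönwall bound: the Hessian form grows at most by `exp (γ ‖v‖)`. -/
lemma hess_key {p : ℕ} (hp : 1 ≤ p) {γ : ℝ} (hγ : 0 < γ)
    (L : EuclideanSpace ℝ (Fin p) → ℝ) (hC3 : ContDiff ℝ 3 L)
    (hSC : ∀ x u v : EuclideanSpace ℝ (Fin p),
      |iteratedFDeriv ℝ 3 L x ![v, u, u]| ≤ γ * iteratedFDeriv ℝ 2 L x ![u, u] * ‖v‖)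
    (x v u : EuclideanSpace ℝ (Fin p)) :
    iteratedFDeriv ℝ 2 L x ![u, u]
      ≤ Real.exp (γ * ‖v‖) * iteratedFDeriv ℝ 2 L (x + v) ![u, u] := by
  set c : ℝ := ‖v‖ with hc
  set g : ℝ → ℝ := fun t => iteratedFDeriv ℝ 2 L (x + t • v) ![u, u] with hg
  set h : ℝ → ℝ := fun t => Real.exp (γ * c * t) * g t with hh
  have hgd : ∀ t, HasDerivAt g (iteratedFDeriv ℝ 3 L (x + t • v) ![v, u, u]) t :=
    fun t => hess_line_deriv L hC3 x v u t
  have hhd : ∀ t, HasDerivAt h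
      (γ * c * Real.exp (γ * c * t) * g t
        + Real.exp (γ * c * t) * iteratedFDeriv ℝ 3 L (x + t • v) ![v, u, u]) t := by
    intro t
    have he : HasDerivAt (fun t : ℝ => Real.exp (γ * c * t))
        (Real.exp (γ * c * t) * (γ * c)) t := by
      simpa using (((hasDerivAt_id t).const_mul (γ * c)).exp)
    have := he.mul (hgd t)
    refine this.congr_deriv ?_
    ring
  have hmono : Monotone h := by
    apply monotone_of_deriv_nonneg
    · exact fun t => (hhd t).differentiableAt
    · intro t
      rw [(hhd t).deriv]
      have habs := hSC (x + t • v) u v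
      have hlow : -(γ * g t * c) ≤ iteratedFDeriv ℝ 3 L (x + t • v) ![v, u, u] := by
        have := neg_abs_le (iteratedFDeriv ℝ 3 L (x + t • v) ![v, u, u])
        have h2 : -(γ * iteratedFDeriv ℝ 2 L (x + t • v) ![u, u] * ‖v‖)
            ≤ iteratedFDeriv ℝ 3 L (x + t • v) ![v, u, u] := by linarith [neg_le_neg habs]
        simpa [hg, hc] using h2
      have hgn : 0 ≤ g t := hess_nonneg hp hγ L hSC _ u
      have hE : (0:ℝ) < Real.exp (γ * c * t) := Real.exp_pos _
      nlinarith
  have h01 : h 0 ≤ h 1 := hmono (by norm_num)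
  have hg0 : g 0 = iteratedFDeriv ℝ 2 L x ![u, u] := by simp [hg]
  have hg1 : g 1 = iteratedFDeriv ℝ 2 L (x + v) ![u, u] := by simp [hg]
  simp only [hh, mul_zero, mul_one, Real.exp_zero, one_mul] at h01
  rw [hg0, hg1] at h01
  exact h01

/-- Reverse form of the key bound. -/
lemma hess_key' {p : ℕ} (hp : 1 ≤ p) {γ : ℝ} (hγ : 0 < γ)
    (L : EuclideanSpace ℝ (Fin p) → ℝ) (hC3 : ContDiff ℝ 3 L)
    (hSC : ∀ x u v : EuclideanSpace ℝ (Fin p),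
      |iteratedFDeriv ℝ 3 L x ![v, u, u]| ≤ γ * iteratedFDeriv ℝ 2 L x ![u, u] * ‖v‖)
    (x y u : EuclideanSpace ℝ (Fin p)) :
    Real.exp (-(γ * ‖y - x‖)) * iteratedFDeriv ℝ 2 L x ![u, u]
      ≤ iteratedFDeriv ℝ 2 L y ![u, u] := by
  have h := hess_key hp hγ L hC3 hSC x (y - x) u
  rw [add_sub_cancel] at h
  rw [Real.exp_neg, inv_mul_le_iff₀ (Real.exp_pos _)]
  exact h

theorem stmt_10 {p : ℕ} (hp : 1 ≤ p) (γ : ℝ) (hγ : 0 < γ)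
    (L : EuclideanSpace ℝ (Fin p) → ℝ) (hC3 : ContDiff ℝ 3 L)
    (hSC : ∀ x u v : EuclideanSpace ℝ (Fin p),
      |iteratedFDeriv ℝ 3 L x ![v, u, u]| ≤ γ * iteratedFDeriv ℝ 2 L x ![u, u] * ‖v‖) :
    (∀ (θ₀ : EuclideanSpace ℝ (Fin p)) (r : ℝ), 0 < r →
      ∀ θ : EuclideanSpace ℝ (Fin p), ‖θ - θ₀‖ ≤ r →
        Real.exp (-(γ * r)) * hessLambdaMin L θ₀ ≤ hessLambdaMin L θ) ∧
    (∀ (Θ₀ : Set (EuclideanSpace ℝ (Fin p))) (D : ℝ),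
      (∀ a ∈ Θ₀, ∀ b ∈ Θ₀, ‖a - b‖ ≤ D) →
      (∀ θ₁ ∈ Θ₀, ∀ θ₂ ∈ Θ₀,
        iteratedFDeriv ℝ 2 L θ₂ ![θ₁ - θ₂, θ₁ - θ₂] ≤
          Real.exp (γ * D) * iteratedFDeriv ℝ 2 L θ₁ ![θ₁ - θ₂, θ₁ - θ₂]) ∧
      (∀ θ₀' ∈ Θ₀,
        (∀ u : EuclideanSpace ℝ (Fin p), u ≠ 0 → 0 < iteratedFDeriv ℝ 2 L θ₀' ![u, u]) →
        ∀ θ ∈ Θ₀, ∀ u : EuclideanSpace ℝ (Fin p), u ≠ 0 →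
          0 < iteratedFDeriv ℝ 2 L θ ![u, u])) := by
  have hnonneg := hess_nonneg hp hγ L hSC
  have key := hess_key hp hγ L hC3 hSC
  have key' := hess_key' hp hγ L hC3 hSC
  have hpt : ∀ (x y u : EuclideanSpace ℝ (Fin p)) (r : ℝ), ‖y - x‖ ≤ r →
      Real.exp (-(γ * r)) * iteratedFDeriv ℝ 2 L x ![u, u]
        ≤ iteratedFDeriv ℝ 2 L y ![u, u] := by
    intro x y u r hr
    refine le_trans ?_ (key' x y u)
    apply mul_le_mul_of_nonneg_right _ (hnonneg x u)
    exact Real.exp_le_exp.mpr (by nlinarith)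
  constructor
  · intro θ₀ r hr θ hθ
    haveI : Nonempty (Metric.sphere (0 : EuclideanSpace ℝ (Fin p)) 1) := by
      refine ⟨⟨EuclideanSpace.single ⟨0, hp⟩ 1, ?_⟩⟩
      simp [EuclideanSpace.norm_single]
    unfold hessLambdaMin
    apply le_ciInf
    intro u
    have hbdd : BddBelow (Set.range fun w : Metric.sphere (0 : EuclideanSpace ℝ (Fin p)) 1 =>
        iteratedFDeriv ℝ 2 L θ₀ ![w.1, w.1]) :=
      ⟨0, by rintro _ ⟨w, rfl⟩; exact hnonneg _ _⟩
    have h1 : (⨅ w : Metric.sphere (0 : EuclideanSpace ℝ (Fin p)) 1,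
        iteratedFDeriv ℝ 2 L θ₀ ![w.1, w.1]) ≤ iteratedFDeriv ℝ 2 L θ₀ ![u.1, u.1] :=
      ciInf_le hbdd u
    calc Real.exp (-(γ * r)) * ⨅ w : Metric.sphere (0 : EuclideanSpace ℝ (Fin p)) 1,
          iteratedFDeriv ℝ 2 L θ₀ ![w.1, w.1]
        ≤ Real.exp (-(γ * r)) * iteratedFDeriv ℝ 2 L θ₀ ![u.1, u.1] :=
          mul_le_mul_of_nonneg_left h1 (Real.exp_pos _).le
      _ ≤ iteratedFDeriv ℝ 2 L θ ![u.1, u.1] := hpt θ₀ θ u.1 r hθ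
  · intro Θ₀ D hdiam
    constructor
    · intro θ₁ h1 θ₂ h2
      have hk := key θ₂ (θ₁ - θ₂) (θ₁ - θ₂)
      rw [add_sub_cancel] at hk
      refine hk.trans ?_
      apply mul_le_mul_of_nonneg_right _ (hnonneg _ _)
      exact Real.exp_le_exp.mpr (mul_le_mul_of_nonneg_left (hdiam θ₁ h1 θ₂ h2) hγ.le)
    · intro θ₀' h0 hpd θ hθ u hu
      have hk := key' θ₀' θ u
      have : 0 < Real.exp (-(γ * ‖θ - θ₀'‖)) * iteratedFDeriv ℝ 2 L θ₀' ![u, u] :=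
        mul_pos (Real.exp_pos _) (hpd u hu)
      linarith
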